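/- For all u > 2, e^{2u} · ((u−1)(u−2)/((u+1)(u+2)))^{(u²−4)/3} · ((u−1)/(u+1))³ ≥ 1. -/

import Mathlib

open Real

/-- The auxiliary function whose nonnegativity encodes
`artanh t ≤ t + t³/3 + t⁵/(5(1-t²))`. -/
noncomputable def Faux : ℝ → ℝ := fun t =>
  2 * t + 2 * t ^ 3 / 3 + 2 * t ^ 5 / (5 * (1 - t ^ 2))
    - (Real.log (1 + t) - Real.log (1 - t))

lemma Faux_hasDerivAt {x : ℝ} (hx1 : -1 < x) (hx2 : x < 1) :
    HasDerivAt Faux (4 * x ^ 6 / (5 * (1 - x ^ 2) ^ 2)) x := by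
  have h1 : (0:ℝ) < 1 + x := by linarith
  have h2 : (0:ℝ) < 1 - x := by linarith
  have hsq : (0:ℝ) < 1 - x ^ 2 := by nlinarith
  have hd : (5 * (1 - x ^ 2)) ≠ 0 := by positivity
  have hA : HasDerivAt (fun t : ℝ => 2 * t) 2 x := by
    simpa using (hasDerivAt_id x).const_mul (2:ℝ)
  have hB : HasDerivAt (fun t : ℝ => 2 * t ^ 3 / 3) (2 * (3 * x ^ 2) / 3) x := by
    exact ((hasDerivAt_pow 3 x).const_mul (2:ℝ)).div_const 3
  have hnum : HasDerivAt (fun t : ℝ => 2 * t ^ 5) (2 * (5 * x ^ 4)) x := by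
    exact (hasDerivAt_pow 5 x).const_mul (2:ℝ)
  have hden : HasDerivAt (fun t : ℝ => 5 * (1 - t ^ 2)) (5 * (0 - 2 * x)) x := by
    have := ((hasDerivAt_const x (1:ℝ)).sub (hasDerivAt_pow 2 x)).const_mul (5:ℝ)
    convert this using 1
    all_goals first | rfl | norm_num
  have hC : HasDerivAt (fun t : ℝ => 2 * t ^ 5 / (5 * (1 - t ^ 2)))
      ((2 * (5 * x ^ 4) * (5 * (1 - x ^ 2)) - 2 * x ^ 5 * (5 * (0 - 2 * x)))
        / (5 * (1 - x ^ 2)) ^ 2) x := hnum.div hden hd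
  have hL1 : HasDerivAt (fun t : ℝ => Real.log (1 + t)) (1 / (1 + x)) x := by
    have := (Real.hasDerivAt_log (ne_of_gt h1)).comp x ((hasDerivAt_id x).const_add 1)
    convert this using 1
    all_goals first | rfl | simp
  have hL2 : HasDerivAt (fun t : ℝ => Real.log (1 - t)) (-(1 / (1 - x))) x := by
    have := (Real.hasDerivAt_log (ne_of_gt h2)).comp x ((hasDerivAt_id x).const_sub 1)
    convert this using 1
    all_goals first | rfl | simp
  have h := ((hA.add hB).add hC).sub (hL1.sub hL2)
  convert h using 1
  all_goals try rfl
  have e1 : (1 + x) ≠ 0 := ne_of_gt h1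
  have e2 : (1 - x) ≠ 0 := ne_of_gt h2
  have e3 : (1 - x ^ 2) ≠ 0 := ne_of_gt hsq
  field_simp
  ring

lemma Faux_nonneg {t : ℝ} (h0 : 0 ≤ t) (h1 : t < 1) : 0 ≤ Faux t := by
  have hmono : MonotoneOn Faux (Set.Ico (0:ℝ) 1) := by
    have hdiff : ∀ x ∈ Set.Ico (0:ℝ) 1, HasDerivAt Faux
        (4 * x ^ 6 / (5 * (1 - x ^ 2) ^ 2)) x := by
      intro x hx
      exact Faux_hasDerivAt (by linarith [hx.1]) hx.2
    apply monotoneOn_of_deriv_nonneg (convex_Ico 0 1)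
    · intro x hx
      exact (hdiff x hx).differentiableAt.continuousAt.continuousWithinAt
    · intro x hx
      rw [interior_Ico] at hx
      exact ((hdiff x ⟨le_of_lt hx.1, hx.2⟩).differentiableAt).differentiableWithinAt
    · intro x hx
      rw [interior_Ico] at hx
      rw [(hdiff x ⟨le_of_lt hx.1, hx.2⟩).deriv]
      have : (0:ℝ) < 1 - x ^ 2 := by nlinarith [hx.1, hx.2]
      positivity
  have h00 : Faux 0 = 0 := by simp [Faux]
  have := hmono (Set.mem_Ico.mpr ⟨le_refl 0, by norm_num⟩) (Set.mem_Ico.mpr ⟨h0, h1⟩) h0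
  linarith [this, h00.symm ▸ this]

/-- Key log bound. -/
lemma log_ratio_le {t : ℝ} (h0 : 0 ≤ t) (h1 : t < 1) :
    Real.log (1 + t) - Real.log (1 - t) ≤
      2 * t + 2 * t ^ 3 / 3 + 2 * t ^ 5 / (5 * (1 - t ^ 2)) := by
  have := Faux_nonneg h0 h1
  unfold Faux at this
  linarith

set_option maxHeartbeats 1000000 in
lemma ratineq (u : ℝ) (hu : 2 < u) :
    0 ≤ 2*u - (u^2-4)/3 * ((2*(1/u) + 2*(1/u)^3/3 + 2*(1/u)^5/(5*(1-(1/u)^2)))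
        + (2*(2/u) + 2*(2/u)^3/3 + 2*(2/u)^5/(5*(1-(2/u)^2))))
      - 3*(2*(1/u) + 2*(1/u)^3/3 + 2*(1/u)^5/(5*(1-(1/u)^2))) := by
  have hu0 : (0:ℝ) < u := by linarith
  have hq1 : (1:ℝ) - (1/u)^2 = (u^2-1)/u^2 := by field_simp
  have hq2 : (1:ℝ) - (2/u)^2 = (u^2-4)/u^2 := by field_simp; norm_num
  rw [hq1, hq2]
  have d1 : u^2 - 1 ≠ 0 := by nlinarith
  have d2 : u^2 - 4 ≠ 0 := by nlinarith
  have hid : 2*u - (u^2-4)/3 * ((2*(1/u) + 2*(1/u)^3/3 + 2*(1/u)^5/(5*((u^2-1)/u^2)))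
        + (2*(2/u) + 2*(2/u)^3/3 + 2*(2/u)^5/(5*((u^2-4)/u^2))))
      - 3*(2*(1/u) + 2*(1/u)^3/3 + 2*(1/u)^5/(5*((u^2-1)/u^2)))
      = (24*u^2-36)/(15*u^3*(u^2-1)) := by
    field_simp
    ring
  rw [hid]
  have h1 : (0:ℝ) < u^2 - 1 := by nlinarith
  have h2 : (0:ℝ) ≤ 24*u^2 - 36 := by nlinarith
  positivity

set_option maxHeartbeats 1000000 in
theorem stmt13 :
    ∀ u : ℝ, 2 < u →
      1 ≤ Real.exp (2 * u) *
          (((u - 1) * (u - 2)) / ((u + 1) * (u + 2))) ^ ((u ^ 2 - 4) / 3) *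
          ((u - 1) / (u + 1)) ^ (3 : ℕ) := by
  intro u hu
  have hu0 : (0:ℝ) < u := by linarith
  have h1 : (0:ℝ) < u - 1 := by linarith
  have h2 : (0:ℝ) < u - 2 := by linarith
  have h3 : (0:ℝ) < u + 1 := by linarith
  have h4 : (0:ℝ) < u + 2 := by linarith
  -- the two log bounds
  have ht1 : (0:ℝ) ≤ 1 / u := by positivity
  have ht1' : 1 / u < 1 := by rw [div_lt_one hu0]; linarith
  have ht2 : (0:ℝ) ≤ 2 / u := by positivity
  have ht2' : 2 / u < 1 := by rw [div_lt_one hu0]; linarith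
  have ha := log_ratio_le ht1 ht1'
  have hb := log_ratio_le ht2 ht2'
  have e1 : (1:ℝ) + 1 / u = (u + 1) / u := by field_simp
  have e2 : (1:ℝ) - 1 / u = (u - 1) / u := by field_simp
  have e3 : (1:ℝ) + 2 / u = (u + 2) / u := by field_simp
  have e4 : (1:ℝ) - 2 / u = (u - 2) / u := by field_simp
  rw [e1, e2, Real.log_div (ne_of_gt h3) (ne_of_gt hu0),
      Real.log_div (ne_of_gt h1) (ne_of_gt hu0)] at ha
  rw [e3, e4, Real.log_div (ne_of_gt h4) (ne_of_gt hu0),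
      Real.log_div (ne_of_gt h2) (ne_of_gt hu0)] at hb
  set L1 := Real.log (u - 1)
  set L2 := Real.log (u - 2)
  set L3 := Real.log (u + 1)
  set L4 := Real.log (u + 2)
  set A : ℝ := 2 * (1/u) + 2 * (1/u) ^ 3 / 3 + 2 * (1/u) ^ 5 / (5 * (1 - (1/u) ^ 2)) with hA
  set B : ℝ := 2 * (2/u) + 2 * (2/u) ^ 3 / 3 + 2 * (2/u) ^ 5 / (5 * (1 - (2/u) ^ 2)) with hB
  have ha' : L3 - L1 ≤ A := by linarith
  have hb' : L4 - L2 ≤ B := by linarith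
  -- rewrite the product as a single exponential
  have hR : (0:ℝ) < ((u - 1) * (u - 2)) / ((u + 1) * (u + 2)) := by positivity
  have hr : (0:ℝ) < (u - 1) / (u + 1) := by positivity
  have hrw : Real.exp (2 * u) *
      (((u - 1) * (u - 2)) / ((u + 1) * (u + 2))) ^ ((u ^ 2 - 4) / 3) *
      ((u - 1) / (u + 1)) ^ (3 : ℕ)
      = Real.exp (2 * u + (u ^ 2 - 4) / 3 * Real.log (((u - 1) * (u - 2)) / ((u + 1) * (u + 2)))
          + (3:ℕ) * Real.log ((u - 1) / (u + 1))) := by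
    rw [Real.rpow_def_of_pos hR, Real.exp_add, Real.exp_add, Real.exp_nat_mul,
        Real.exp_log hr, mul_comm (Real.log (((u - 1) * (u - 2)) / ((u + 1) * (u + 2))))]
  rw [hrw]
  apply Real.one_le_exp
  have lR : Real.log (((u - 1) * (u - 2)) / ((u + 1) * (u + 2)))
      = (L1 + L2) - (L3 + L4) := by
    rw [Real.log_div (by positivity) (by positivity), Real.log_mul (ne_of_gt h1) (ne_of_gt h2),
        Real.log_mul (ne_of_gt h3) (ne_of_gt h4)]
  have lr : Real.log ((u - 1) / (u + 1)) = L1 - L3 := Real.log_div (ne_of_gt h1) (ne_of_gt h3)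
  rw [lR, lr]
  have he : (0:ℝ) ≤ (u ^ 2 - 4) / 3 := by nlinarith
  have key : 0 ≤ 2 * u - (u ^ 2 - 4) / 3 * (A + B) - 3 * A := by
    have := ratineq u hu
    rw [hA, hB]
    linarith
  have hmul : (u ^ 2 - 4) / 3 * ((L3 - L1) + (L4 - L2)) ≤ (u ^ 2 - 4) / 3 * (A + B) :=
    mul_le_mul_of_nonneg_left (by linarith) he
  push_cast
  generalize hE : (u ^ 2 - 4) / 3 = E at hmul key ⊢
  linarith [hmul, ha', key]
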